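/- If all entries of P are nonnegative, then F(0) = 0, F(1) = 1, F is nondecreasing and continuous, hence F is a continuous probability distribution function on [0,1]. -/

import Mathlib

open Finset Filter Topology MeasureTheory

noncomputable section

/-- `rowSum p n k = Σ_{i<k} p_{i,n}` (the numbers `β_{k,n}`). -/
def rowSum (p : ℕ → ℕ → ℝ) (n k : ℕ) : ℝ := ∑ i ∈ Finset.range k, p n i

/-- Index flip at even positions: `tw m f n i = f n i` for odd `n`, `f n (m n - i)` for even `n`. -/
def tw (m : ℕ → ℕ) (f : ℕ → ℕ → ℝ) (n i : ℕ) : ℝ :=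
  if Odd n then f n i else f n (m n - i)

/-- Tail value of the (nega-)expansion determined by `f` from position `k+1` on. -/
def negaShift (m : ℕ → ℕ) (f : ℕ → ℕ → ℝ) (d : ℕ → ℕ) (k : ℕ) : ℝ :=
  ∑' j : ℕ, tw m (rowSum f) (k + j + 1) (d (k + j + 1)) *
    ∏ t ∈ Finset.Icc (k + 1) (k + j), tw m f t (d t)

/-- The nega-expansion value: `negaVal m f d = β̃_{d₁,1} + Σ_{k≥2} β̃_{d_k,k} Π_{j<k} f̃_{d_j,j}`. -/
def negaVal (m : ℕ → ℕ) (f : ℕ → ℕ → ℝ) (d : ℕ → ℕ) : ℝ := negaShift m f d 0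

/-- A digit sequence for the alphabet sizes `m`. -/
def ValidDigits (m : ℕ → ℕ) (d : ℕ → ℕ) : Prop := ∀ n, d n ≤ m n

namespace S10

/-- twisted digits -/
def E (m : ℕ → ℕ) (d : ℕ → ℕ) (n : ℕ) : ℕ := if Odd n then d n else m n - d n

lemma E_valid {m d : ℕ → ℕ} (hd : ValidDigits m d) : ValidDigits m (E m d) := by
  intro n; unfold E; split_ifs; · exact hd n
  · exact Nat.sub_le _ _

lemma E_E {m d : ℕ → ℕ} (hd : ValidDigits m d) : E m (E m d) = d := by
  funext n; unfold E; split_ifs with h; · rfl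
  · exact Nat.sub_sub_self (hd n)

/-- terms of the shifted series -/
def term (f : ℕ → ℕ → ℝ) (e : ℕ → ℕ) (k j : ℕ) : ℝ :=
  rowSum f (k + j + 1) (e (k + j + 1)) * ∏ t ∈ Finset.Icc (k + 1) (k + j), f t (e t)

def sval (f : ℕ → ℕ → ℝ) (e : ℕ → ℕ) (k : ℕ) : ℝ := ∑' j : ℕ, term f e k j

lemma negaShift_eq (m : ℕ → ℕ) (f : ℕ → ℕ → ℝ) (d : ℕ → ℕ) (k : ℕ) :
    negaShift m f d k = sval f (E m d) k := by
  unfold negaShift sval term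
  refine tsum_congr fun j => ?_
  have h1 : ∀ n i, tw m f n i = f n (E m (fun _ => i) n) := by
    intro n i; unfold tw E; split_ifs <;> rfl
  congr 1
  · unfold tw E; split_ifs <;> rfl
  · exact Finset.prod_congr rfl fun t _ => by unfold tw E; split_ifs <;> rfl

section Core

variable {m : ℕ → ℕ} {f : ℕ → ℕ → ℝ} {e e' : ℕ → ℕ}

lemma rowSum_succ (n k : ℕ) : rowSum f n (k + 1) = rowSum f n k + f n k :=
  Finset.sum_range_succ _ _

variable (hf0 : ∀ n i, i ≤ m n → 0 ≤ f n i) (hf1 : ∀ n, rowSum f n (m n + 1) = 1)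

include hf0 in
lemma rowSum_nonneg {n k : ℕ} (hk : k ≤ m n + 1) : 0 ≤ rowSum f n k :=
  Finset.sum_nonneg fun i hi => hf0 n i (by have := Finset.mem_range.1 hi; omega)

include hf0 in
lemma rowSum_mono {n k k' : ℕ} (h : k ≤ k') (hk' : k' ≤ m n + 1) :
    rowSum f n k ≤ rowSum f n k' := by
  unfold rowSum
  refine Finset.sum_le_sum_of_subset_of_nonneg (Finset.range_subset_range.2 h) ?_
  intro i hi _; exact hf0 n i (by have := Finset.mem_range.1 hi; omega)

include hf0 hf1 in
lemma rowSum_le_one {n k : ℕ} (hk : k ≤ m n + 1) : rowSum f n k ≤ 1 :=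
  (rowSum_mono hf0 hk le_rfl).trans (hf1 n).le

variable (he : ValidDigits m e) (he' : ValidDigits m e')

include hf0 he in
lemma term_nonneg (k j : ℕ) : 0 ≤ term f e k j := by
  refine mul_nonneg (rowSum_nonneg hf0 (by have := he (k + j + 1); omega)) ?_
  exact Finset.prod_nonneg fun t _ => hf0 t _ (he t)

lemma term_succ (k j : ℕ) :
    term f e k (j + 1) = f (k + 1) (e (k + 1)) * term f e (k + 1) j := by
  unfold term
  have hIcc : Finset.Icc (k + 1) (k + (j + 1)) = insert (k + 1) (Finset.Icc (k + 1 + 1) (k + 1 + j)) := by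
    ext t; simp only [Finset.mem_Icc, Finset.mem_insert]; omega
  rw [hIcc, Finset.prod_insert (by simp only [Finset.mem_Icc]; omega)]
  have h2 : k + (j + 1) + 1 = k + 1 + j + 1 := by omega
  rw [h2]; ring

lemma psum_succ (k N : ℕ) :
    ∑ j ∈ Finset.range (N + 1), term f e k j
      = rowSum f (k + 1) (e (k + 1)) + f (k + 1) (e (k + 1)) * ∑ j ∈ Finset.range N, term f e (k + 1) j := by
  rw [Finset.sum_range_succ']
  have h0 : term f e k 0 = rowSum f (k + 1) (e (k + 1)) := by
    unfold term; simp
  have h1 : ∀ j, term f e k (j + 1) = f (k + 1) (e (k + 1)) * term f e (k + 1) j :=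
    fun j => term_succ k j
  rw [h0, Finset.sum_congr rfl fun j _ => h1 j, ← Finset.mul_sum]
  ring

include hf0 hf1 he in
lemma psum_le_one : ∀ N k, ∑ j ∈ Finset.range N, term f e k j ≤ 1 := by
  intro N
  induction N with
  | zero => intro k; simp
  | succ N ih =>
    intro k
    rw [psum_succ]
    have h1 : ∑ j ∈ Finset.range N, term f e (k+1) j ≤ 1 := ih (k + 1)
    have h2 : 0 ≤ f (k + 1) (e (k + 1)) := hf0 _ _ (he _)
    calc rowSum f (k + 1) (e (k + 1)) + f (k + 1) (e (k + 1)) * ∑ j ∈ Finset.range N, term f e (k + 1) j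
        ≤ rowSum f (k + 1) (e (k + 1)) + f (k + 1) (e (k + 1)) * 1 := by nlinarith
      _ = rowSum f (k + 1) (e (k + 1) + 1) := by rw [rowSum_succ]; ring
      _ ≤ 1 := rowSum_le_one hf0 hf1 (by have := he (k+1); omega)

include hf0 hf1 he in
lemma summable_term (k : ℕ) : Summable (term f e k) :=
  summable_of_sum_range_le (term_nonneg hf0 he k) (fun N => psum_le_one hf0 hf1 he N k)

include hf0 he in
lemma sval_nonneg (k : ℕ) : 0 ≤ sval f e k :=
  tsum_nonneg (term_nonneg hf0 he k)

include hf0 hf1 he in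
lemma sval_le_one (k : ℕ) : sval f e k ≤ 1 :=
  Summable.tsum_le_of_sum_range_le (summable_term hf0 hf1 he k) (fun N => psum_le_one hf0 hf1 he N k)

include hf0 hf1 he in
lemma sval_rec (k : ℕ) :
    sval f e k = rowSum f (k + 1) (e (k + 1)) + f (k + 1) (e (k + 1)) * sval f e (k + 1) := by
  unfold sval
  rw [Summable.tsum_eq_zero_add (summable_term hf0 hf1 he k)]
  congr 1
  · unfold term; simp
  · rw [tsum_congr (fun j => term_succ (f := f) (e := e) k j), tsum_mul_left]

lemma sval_congr_tail (k : ℕ) (h : ∀ t, k < t → e t = e' t) : sval f e k = sval f e' k := by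
  unfold sval
  refine tsum_congr fun j => ?_
  unfold term
  rw [h (k + j + 1) (by omega)]
  congr 1
  exact Finset.prod_congr rfl fun t ht => by
    rw [h t (by have := (Finset.mem_Icc.1 ht).1; omega)]

include hf0 hf1 he in
lemma sval_le_rowSum_succ (k : ℕ) : sval f e k ≤ rowSum f (k + 1) (e (k + 1) + 1) := by
  rw [sval_rec hf0 hf1 he, rowSum_succ]
  have h1 := sval_le_one hf0 hf1 he (k + 1)
  have h2 := hf0 (k + 1) (e (k + 1)) (he (k + 1))
  nlinarith

include hf0 hf1 he in
lemma rowSum_le_sval (k : ℕ) : rowSum f (k + 1) (e (k + 1)) ≤ sval f e k := by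
  rw [sval_rec hf0 hf1 he]
  have h1 := sval_nonneg hf0 he (k + 1)
  have h2 := hf0 (k + 1) (e (k + 1)) (he (k + 1))
  nlinarith

include hf0 hf1 he he' in
lemma sval_le_of_digit_lt (k : ℕ) (hlt : e (k + 1) < e' (k + 1)) :
    sval f e k ≤ sval f e' k := by
  have h1 := sval_le_rowSum_succ hf0 hf1 he k
  have h2 : rowSum f (k + 1) (e (k + 1) + 1) ≤ rowSum f (k + 1) (e' (k + 1)) :=
    rowSum_mono hf0 (by omega) (by have := he' (k + 1); omega)
  have h3 := rowSum_le_sval hf0 hf1 he' k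
  linarith

include hf0 hf1 he he' in
lemma sval_le_of_lex : ∀ j k, (∀ t, k < t → t < k + j + 1 → e t = e' t) →
    e (k + j + 1) < e' (k + j + 1) → sval f e k ≤ sval f e' k := by
  intro j
  induction j with
  | zero => intro k _ hlt; exact sval_le_of_digit_lt hf0 hf1 he he' k hlt
  | succ j ih =>
    intro k hpre hlt
    have hd : e (k + 1) = e' (k + 1) := hpre (k + 1) (by omega) (by omega)
    have hih : sval f e (k + 1) ≤ sval f e' (k + 1) := by
      refine ih (k + 1) (fun t h1 h2 => hpre t (by omega) (by omega)) ?_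
      have : k + 1 + j + 1 = k + (j + 1) + 1 := by omega
      rw [this]; exact hlt
    have hre := sval_rec hf0 hf1 he k
    have hre' := sval_rec hf0 hf1 he' k
    rw [← hd] at hre'
    have h2 := hf0 (k + 1) (e (k + 1)) (he (k + 1))
    nlinarith

end Core

section Positive

variable {m : ℕ → ℕ} {q : ℕ → ℕ → ℝ} {e e' : ℕ → ℕ}
variable (hq0 : ∀ n i, i ≤ m n → 0 < q n i) (hq1 : ∀ n, rowSum q n (m n + 1) = 1)
variable (he : ValidDigits m e) (he' : ValidDigits m e')

include hq0 in
lemma q_nn : ∀ n i, i ≤ m n → 0 ≤ q n i := fun n i h => (hq0 n i h).le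

include hq0 in
lemma rowSum_strict_mono {n k k' : ℕ} (h : k < k') (hk' : k' ≤ m n + 1) :
    rowSum q n k < rowSum q n k' := by
  have h1 : rowSum q n k + q n k ≤ rowSum q n k' := by
    rw [← rowSum_succ]; exact rowSum_mono (q_nn hq0) h hk'
  have h2 := hq0 n k (by omega)
  linarith

include hq0 hq1 he he' in
lemma eq_forcing (k : ℕ) (hlt : e (k + 1) < e' (k + 1))
    (heq : sval q e k = sval q e' k) :
    e' (k + 1) = e (k + 1) + 1 ∧ sval q e (k + 1) = 1 ∧ sval q e' (k + 1) = 0 := by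
  have hr := sval_rec (q_nn hq0) hq1 he k
  have hr' := sval_rec (q_nn hq0) hq1 he' k
  have hT1 := sval_le_one (q_nn hq0) hq1 he (k + 1)
  have hT0 := sval_nonneg (q_nn hq0) he' (k + 1)
  have ha := hq0 (k + 1) (e (k + 1)) (he (k + 1))
  have ha' := hq0 (k + 1) (e' (k + 1)) (he' (k + 1))
  have hmono : rowSum q (k + 1) (e (k + 1) + 1) ≤ rowSum q (k + 1) (e' (k + 1)) :=
    rowSum_mono (q_nn hq0) (by omega) (by have := he' (k + 1); omega)
  rw [rowSum_succ] at hmono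
  have hT1' : sval q e (k + 1) = 1 := by nlinarith
  have hT0' : sval q e' (k + 1) = 0 := by nlinarith
  refine ⟨?_, hT1', hT0'⟩
  by_contra hne
  have hlt2 : e (k + 1) + 1 < e' (k + 1) := by omega
  have := rowSum_strict_mono hq0 (n := k + 1) hlt2 (by have := he' (k + 1); omega)
  rw [rowSum_succ] at this
  nlinarith

include hq0 hq1 he he' in
lemma eq_forcing_lex : ∀ j k, (∀ t, k < t → t < k + j + 1 → e t = e' t) →
    e (k + j + 1) < e' (k + j + 1) → sval q e k = sval q e' k →
    e' (k + j + 1) = e (k + j + 1) + 1 ∧ sval q e (k + j + 1) = 1 ∧ sval q e' (k + j + 1) = 0 := by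
  intro j
  induction j with
  | zero => intro k _ hlt heq; exact eq_forcing hq0 hq1 he he' k hlt heq
  | succ j ih =>
    intro k hpre hlt heq
    have hd : e (k + 1) = e' (k + 1) := hpre (k + 1) (by omega) (by omega)
    have hr := sval_rec (q_nn hq0) hq1 he k
    have hr' := sval_rec (q_nn hq0) hq1 he' k
    rw [← hd] at hr'
    have ha := hq0 (k + 1) (e (k + 1)) (he (k + 1))
    have heq2 : sval q e (k + 1) = sval q e' (k + 1) := by
      have : q (k + 1) (e (k + 1)) * sval q e (k + 1)
          = q (k + 1) (e (k + 1)) * sval q e' (k + 1) := by linarith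
      exact mul_left_cancel₀ (ne_of_gt ha) this
    have harith : k + 1 + j + 1 = k + (j + 1) + 1 := by omega
    have hlt2 : e (k + 1 + j + 1) < e' (k + 1 + j + 1) := by rw [harith]; exact hlt
    have := ih (k + 1) (fun t h1 h2 => hpre t (by omega) (by omega)) hlt2 heq2
    rw [harith] at this
    exact this

include hq0 hq1 he in
lemma step_max (k : ℕ) (h1 : sval q e k = 1) :
    e (k + 1) = m (k + 1) ∧ sval q e (k + 1) = 1 := by
  have hr := sval_rec (q_nn hq0) hq1 he k
  have hT1 := sval_le_one (q_nn hq0) hq1 he (k + 1)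
  have ha := hq0 (k + 1) (e (k + 1)) (he (k + 1))
  have hchain : rowSum q (k + 1) (e (k + 1) + 1) ≤ 1 :=
    rowSum_le_one (q_nn hq0) hq1 (by have := he (k + 1); omega)
  rw [rowSum_succ] at hchain
  have hdig : e (k + 1) = m (k + 1) := by
    by_contra hne
    have hlt : e (k + 1) + 1 < m (k + 1) + 1 := by have := he (k + 1); omega
    have := rowSum_strict_mono hq0 (n := k + 1) hlt (le_refl _)
    rw [rowSum_succ, hq1 (k + 1)] at this
    nlinarith
  exact ⟨hdig, by nlinarith⟩

include hq0 hq1 he in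
lemma tail_max (k : ℕ) (h1 : sval q e k = 1) : ∀ t, k < t → e t = m t := by
  have haux : ∀ j, sval q e (k + j) = 1 := by
    intro j
    induction j with
    | zero => exact h1
    | succ j ih => exact (step_max hq0 hq1 he (k + j) ih).2
  intro t ht
  obtain ⟨j, rfl⟩ : ∃ j, t = k + j + 1 := ⟨t - k - 1, by omega⟩
  exact (step_max hq0 hq1 he (k + j) (haux j)).1

include hq0 hq1 he in
lemma step_min (k : ℕ) (h0 : sval q e k = 0) :
    e (k + 1) = 0 ∧ sval q e (k + 1) = 0 := by
  have hr := sval_rec (q_nn hq0) hq1 he k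
  have hT0 := sval_nonneg (q_nn hq0) he (k + 1)
  have ha := hq0 (k + 1) (e (k + 1)) (he (k + 1))
  have hb : 0 ≤ rowSum q (k + 1) (e (k + 1)) :=
    rowSum_nonneg (q_nn hq0) (by have := he (k + 1); omega)
  have hdig : e (k + 1) = 0 := by
    by_contra hne
    have : rowSum q (k + 1) 0 < rowSum q (k + 1) (e (k + 1)) :=
      rowSum_strict_mono hq0 (by omega) (by have := he (k + 1); omega)
    have hz : rowSum q (k + 1) 0 = 0 := Finset.sum_range_zero _
    nlinarith
  have hbz : rowSum q (k + 1) (e (k + 1)) = 0 := by rw [hdig]; exact Finset.sum_range_zero _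
  exact ⟨hdig, by nlinarith⟩

include hq0 hq1 he in
lemma tail_min (k : ℕ) (h0 : sval q e k = 0) : ∀ t, k < t → e t = 0 := by
  have haux : ∀ j, sval q e (k + j) = 0 := by
    intro j
    induction j with
    | zero => exact h0
    | succ j ih => exact (step_min hq0 hq1 he (k + j) ih).2
  intro t ht
  obtain ⟨j, rfl⟩ : ∃ j, t = k + j + 1 := ⟨t - k - 1, by omega⟩
  exact (step_min hq0 hq1 he (k + j) (haux j)).1

end Positive

section Tail

variable {m : ℕ → ℕ} {f : ℕ → ℕ → ℝ} {e : ℕ → ℕ}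
variable (hf0 : ∀ n i, i ≤ m n → 0 ≤ f n i) (hf1 : ∀ n, rowSum f n (m n + 1) = 1)
variable (he : ValidDigits m e)

lemma sval_of_tail_zero (k : ℕ) (h : ∀ t, k < t → e t = 0) : sval f e k = 0 := by
  unfold sval
  rw [tsum_congr (fun j => ?_), tsum_zero]
  unfold term
  rw [h (k + j + 1) (by omega)]
  simp [rowSum]

include hf0 hf1 he in
lemma one_sub_sval : ∀ N k, (∀ t, k < t → e t = m t) →
    1 - sval f e k = (∏ t ∈ Finset.Icc (k + 1) (k + N), f t (e t)) * (1 - sval f e (k + N)) := by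
  intro N
  induction N with
  | zero => intro k _; simp
  | succ N ih =>
    intro k hmax
    have hstep : 1 - sval f e k = f (k + 1) (e (k + 1)) * (1 - sval f e (k + 1)) := by
      have hr := sval_rec hf0 hf1 he k
      have h1 : rowSum f (k + 1) (e (k + 1)) + f (k + 1) (e (k + 1)) = 1 := by
        rw [← rowSum_succ, hmax (k + 1) (by omega)]
        exact hf1 (k + 1)
      nlinarith
    have hIcc : Finset.Icc (k + 1) (k + (N + 1))
        = insert (k + 1) (Finset.Icc (k + 1 + 1) (k + 1 + N)) := by
      ext t; simp only [Finset.mem_Icc, Finset.mem_insert]; omega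
    rw [hIcc, Finset.prod_insert (by simp only [Finset.mem_Icc]; omega)]
    have harr : k + (N + 1) = k + 1 + N := by omega
    rw [harr, hstep, ih (k + 1) (fun t ht => hmax t (by omega))]
    ring

include hf0 hf1 he in
lemma sval_of_tail_max (k : ℕ)
    (htail : Tendsto (fun N => ∏ t ∈ Finset.Icc (k + 1) (k + N), f t (e t)) atTop (𝓝 0))
    (hmax : ∀ t, k < t → e t = m t) : sval f e k = 1 := by
  have hb : ∀ N, |1 - sval f e k| ≤ ∏ t ∈ Finset.Icc (k + 1) (k + N), f t (e t) := by
    intro N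
    rw [one_sub_sval hf0 hf1 he N k hmax, abs_mul]
    have hp : 0 ≤ ∏ t ∈ Finset.Icc (k + 1) (k + N), f t (e t) :=
      Finset.prod_nonneg fun t _ => hf0 t _ (he t)
    have h1 : |1 - sval f e (k + N)| ≤ 1 := by
      have := sval_nonneg hf0 he (k + N)
      have := sval_le_one hf0 hf1 he (k + N)
      rw [abs_le]; constructor <;> linarith
    calc |∏ t ∈ Finset.Icc (k + 1) (k + N), f t (e t)| * |1 - sval f e (k + N)|
        ≤ |∏ t ∈ Finset.Icc (k + 1) (k + N), f t (e t)| * 1 :=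
          mul_le_mul_of_nonneg_left h1 (abs_nonneg _)
      _ = ∏ t ∈ Finset.Icc (k + 1) (k + N), f t (e t) := by rw [mul_one, abs_of_nonneg hp]
  have h0 : |1 - sval f e k| ≤ 0 := ge_of_tendsto' htail hb
  have := abs_nonneg (1 - sval f e k)
  have : |1 - sval f e k| = 0 := le_antisymm h0 this
  have := abs_eq_zero.1 this
  linarith

include hf0 hf1 he in
lemma tail_prod_tendsto
    (h4 : ∀ d, ValidDigits m d →
      Tendsto (fun N => ∏ j ∈ Finset.Icc 1 N, f j (d j)) atTop (𝓝 0)) (k : ℕ) :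
    Tendsto (fun N => ∏ t ∈ Finset.Icc (k + 1) (k + N), f t (e t)) atTop (𝓝 0) := by
  have hc : ∀ n, ∃ i, i ≤ m n ∧ 0 < f n i := by
    intro n
    by_contra hno
    push_neg at hno
    have hz : ∀ i ∈ Finset.range (m n + 1), f n i = 0 := by
      intro i hi
      have hi' : i ≤ m n := by have := Finset.mem_range.1 hi; omega
      exact le_antisymm (hno i hi') (hf0 n i hi')
    have : rowSum f n (m n + 1) = 0 := Finset.sum_eq_zero hz
    rw [hf1 n] at this
    norm_num at this
  choose c hc1 hc2 using hc
  set d : ℕ → ℕ := fun t => if t ≤ k then c t else e t with hd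
  have hdv : ValidDigits m d := by
    intro n; simp only [hd]; split_ifs; · exact hc1 n
    · exact he n
  have hmain := h4 d hdv
  have hde : ∀ t, k < t → d t = e t := by
    intro t ht; simp only [hd]; rw [if_neg (by omega)]
  have hCpos : 0 < ∏ t ∈ Finset.Ioc 0 k, f t (d t) := by
    refine Finset.prod_pos fun t ht => ?_
    have ht' := (Finset.mem_Ioc.1 ht).2
    simp only [hd]; rw [if_pos ht']
    exact hc2 t
  have hsplit : ∀ N, (∏ t ∈ Finset.Ioc 0 k, f t (d t)) * ∏ t ∈ Finset.Icc (k + 1) (k + N), f t (e t)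
      = ∏ t ∈ Finset.Icc 1 (k + N), f t (d t) := by
    intro N
    have h1 : Finset.Icc 1 (k + N) = Finset.Ioc 0 (k + N) := by
      ext t; simp only [Finset.mem_Icc, Finset.mem_Ioc]; omega
    have h3 : Finset.Icc (k + 1) (k + N) = Finset.Ioc k (k + N) := by
      ext t; simp only [Finset.mem_Icc, Finset.mem_Ioc]; omega
    have h4' : (∏ t ∈ Finset.Ioc k (k + N), f t (e t))
        = ∏ t ∈ Finset.Ioc k (k + N), f t (d t) :=
      Finset.prod_congr rfl fun t ht => by rw [hde t (Finset.mem_Ioc.1 ht).1]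
    rw [h1, h3, h4']
    exact Finset.prod_Ioc_consecutive _ (Nat.zero_le k) (Nat.le_add_right k N)
  have hcomp : Tendsto (fun N => ∏ t ∈ Finset.Icc 1 (N + k), f t (d t)) atTop (𝓝 0) :=
    hmain.comp (tendsto_add_atTop_nat k)
  have hlim : Tendsto (fun N => (∏ t ∈ Finset.Ioc 0 k, f t (d t))⁻¹
      * ∏ t ∈ Finset.Icc 1 (N + k), f t (d t)) atTop
      (𝓝 ((∏ t ∈ Finset.Ioc 0 k, f t (d t))⁻¹ * 0)) := hcomp.const_mul _
  rw [mul_zero] at hlim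
  refine hlim.congr fun N => ?_
  rw [Nat.add_comm N k, ← hsplit N, ← mul_assoc, inv_mul_cancel₀ (ne_of_gt hCpos), one_mul]

end Tail

section Greedy

variable {m : ℕ → ℕ} {f : ℕ → ℕ → ℝ}

open Classical in
/-- greedy digit/remainder sequence -/
def gd (m : ℕ → ℕ) (f : ℕ → ℕ → ℝ) (y : ℝ) : ℕ → ℕ × ℝ
  | 0 => (0, y)
  | n + 1 =>
    let r := gd m f y n |>.2
    let k := Nat.findGreatest (fun i => rowSum f (n + 1) i ≤ r) (m (n + 1))
    (k, if f (n + 1) k = 0 then 1 else (r - rowSum f (n + 1) k) / f (n + 1) k)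

variable (hf0 : ∀ n i, i ≤ m n → 0 ≤ f n i) (hf1 : ∀ n, rowSum f n (m n + 1) = 1)

lemma gd_valid (y : ℝ) : ValidDigits m (fun n => (gd m f y n).1) := by
  intro n
  cases n with
  | zero => exact Nat.zero_le _
  | succ n => exact Nat.findGreatest_le _

include hf0 hf1 in
lemma gd_step (y : ℝ) (n : ℕ) (hr : 0 ≤ (gd m f y n).2 ∧ (gd m f y n).2 ≤ 1) :
    ((gd m f y n).2 = rowSum f (n + 1) ((gd m f y (n + 1)).1)
        + f (n + 1) ((gd m f y (n + 1)).1) * (gd m f y (n + 1)).2)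
      ∧ 0 ≤ (gd m f y (n + 1)).2 ∧ (gd m f y (n + 1)).2 ≤ 1 := by
  classical
  set r := (gd m f y n).2 with hrdef
  set k := Nat.findGreatest (fun i => rowSum f (n + 1) i ≤ r) (m (n + 1)) with hkdef
  have hkm : k ≤ m (n + 1) := Nat.findGreatest_le _
  have hk1 : (gd m f y (n + 1)).1 = k := by
    show (Nat.findGreatest _ _, _).1 = k
    simp [hkdef, hrdef]
  have hk2 : (gd m f y (n + 1)).2
      = if f (n + 1) k = 0 then 1 else (r - rowSum f (n + 1) k) / f (n + 1) k := by
    show (_, if f (n + 1) (Nat.findGreatest _ _) = 0 then _ else _).2 = _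
    simp [hkdef, hrdef]
  have hP0 : rowSum f (n + 1) 0 ≤ r := by
    have : rowSum f (n + 1) 0 = 0 := Finset.sum_range_zero _
    rw [this]; exact hr.1
  have hk0 : rowSum f (n + 1) k ≤ r :=
    Nat.findGreatest_spec (P := fun i => rowSum f (n + 1) i ≤ r) (Nat.zero_le _) hP0
  have hkub : r ≤ rowSum f (n + 1) k + f (n + 1) k := by
    rcases eq_or_lt_of_le hkm with heq | hlt
    · rw [← rowSum_succ, heq, hf1 (n + 1)]; exact hr.2
    · have hng := Nat.findGreatest_is_greatest (P := fun i => rowSum f (n + 1) i ≤ r)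
        (n := m (n + 1)) (k := k + 1) (by omega) (by omega)
      have hng' : ¬(rowSum f (n + 1) (k + 1) ≤ r) := hng
      push_neg at hng'
      rw [rowSum_succ] at hng'
      linarith
  have ha := hf0 (n + 1) k hkm
  rw [hk1, hk2]
  by_cases hz : f (n + 1) k = 0
  · rw [if_pos hz, hz]
    have : r = rowSum f (n + 1) k := by linarith [hkub, hk0, hz ▸ hkub]
    constructor
    · linarith
    · norm_num
  · rw [if_neg hz]
    have hapos : 0 < f (n + 1) k := lt_of_le_of_ne ha (Ne.symm hz)
    refine ⟨by field_simp; ring, ?_, ?_⟩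
    · exact div_nonneg (by linarith) ha
    · rw [div_le_one hapos]; linarith

include hf0 hf1 in
lemma gd_bounds (y : ℝ) (hy : 0 ≤ y ∧ y ≤ 1) :
    ∀ n, 0 ≤ (gd m f y n).2 ∧ (gd m f y n).2 ≤ 1 := by
  intro n
  induction n with
  | zero => exact hy
  | succ n ih => exact (gd_step hf0 hf1 y n ih).2

include hf0 hf1 in
lemma gd_partial (y : ℝ) (hy : 0 ≤ y ∧ y ≤ 1) : ∀ N,
    y = (∑ j ∈ Finset.range N, term f (fun n => (gd m f y n).1) 0 j)
      + (∏ t ∈ Finset.Icc 1 N, f t ((gd m f y t).1)) * (gd m f y N).2 := by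
  intro N
  induction N with
  | zero => simp [gd]
  | succ N ih =>
    have hstep := (gd_step hf0 hf1 y N (gd_bounds hf0 hf1 y hy N)).1
    rw [Finset.sum_range_succ]
    have hterm : term f (fun n => (gd m f y n).1) 0 N
        = rowSum f (N + 1) ((gd m f y (N + 1)).1) * ∏ t ∈ Finset.Icc 1 N, f t ((gd m f y t).1) := by
      unfold term
      rw [Nat.zero_add, Nat.zero_add]
    have hprod : ∏ t ∈ Finset.Icc 1 (N + 1), f t ((gd m f y t).1)
        = (∏ t ∈ Finset.Icc 1 N, f t ((gd m f y t).1)) * f (N + 1) ((gd m f y (N + 1)).1) :=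
      Finset.prod_Icc_succ_top (by omega) _
    rw [hterm, hprod]
    have hx : (∏ t ∈ Finset.Icc 1 N, f t ((gd m f y t).1)) * (gd m f y N).2
        = rowSum f (N + 1) ((gd m f y (N + 1)).1) * ∏ t ∈ Finset.Icc 1 N, f t ((gd m f y t).1)
          + (∏ t ∈ Finset.Icc 1 N, f t ((gd m f y t).1)) * f (N + 1) ((gd m f y (N + 1)).1)
            * (gd m f y (N + 1)).2 := by
      rw [hstep]; ring
    linarith [ih, hx]

include hf0 hf1 in
lemma greedy_surj
    (h4 : ∀ d, ValidDigits m d →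
      Tendsto (fun N => ∏ j ∈ Finset.Icc 1 N, f j (d j)) atTop (𝓝 0))
    (y : ℝ) (hy : 0 ≤ y ∧ y ≤ 1) :
    ∃ e, ValidDigits m e ∧ sval f e 0 = y := by
  set e : ℕ → ℕ := fun n => (gd m f y n).1 with hedef
  have hev : ValidDigits m e := gd_valid y
  refine ⟨e, hev, ?_⟩
  have hsum : Tendsto (fun N => ∑ j ∈ Finset.range N, term f e 0 j) atTop (𝓝 (sval f e 0)) :=
    (summable_term hf0 hf1 hev 0).hasSum.tendsto_sum_nat
  have hprod0 : Tendsto (fun N => ∏ t ∈ Finset.Icc 1 N, f t (e t)) atTop (𝓝 0) := h4 e hev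
  have hrem : Tendsto (fun N => (∏ t ∈ Finset.Icc 1 N, f t (e t)) * (gd m f y N).2) atTop (𝓝 0) := by
    refine squeeze_zero_norm (fun N => ?_) (by simpa using hprod0.abs)
    rw [Real.norm_eq_abs, abs_mul]
    have hb := gd_bounds hf0 hf1 y hy N
    have : |(gd m f y N).2| ≤ 1 := by rw [abs_le]; constructor <;> linarith [hb.1, hb.2]
    calc |∏ t ∈ Finset.Icc 1 N, f t (e t)| * |(gd m f y N).2|
        ≤ |∏ t ∈ Finset.Icc 1 N, f t (e t)| * 1 := mul_le_mul_of_nonneg_left this (abs_nonneg _)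
      _ = |∏ t ∈ Finset.Icc 1 N, f t (e t)| := mul_one _
  have hsum2 : Tendsto (fun N => ∑ j ∈ Finset.range N, term f e 0 j) atTop (𝓝 (y - 0)) := by
    have hfun : ∀ N, ∑ j ∈ Finset.range N, term f e 0 j
        = y - (∏ t ∈ Finset.Icc 1 N, f t (e t)) * (gd m f y N).2 := by
      intro N
      have := gd_partial hf0 hf1 y hy N
      rw [hedef]
      linarith [this]
    rw [funext hfun]
    exact (tendsto_const_nhds (x := y)).sub hrem
  rw [sub_zero] at hsum2
  exact tendsto_nhds_unique hsum hsum2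

end Greedy

section Carry

variable {m : ℕ → ℕ} {f : ℕ → ℕ → ℝ} {e e' : ℕ → ℕ}
variable (hf0 : ∀ n i, i ≤ m n → 0 ≤ f n i) (hf1 : ∀ n, rowSum f n (m n + 1) = 1)
variable (he : ValidDigits m e) (he' : ValidDigits m e')

include hf0 hf1 he he' in
lemma sval_eq_of_carry : ∀ j k, (∀ t, k < t → t < k + j + 1 → e t = e' t) →
    e' (k + j + 1) = e (k + j + 1) + 1 →
    sval f e (k + j + 1) = 1 → sval f e' (k + j + 1) = 0 →
    sval f e k = sval f e' k := by
  intro j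
  induction j with
  | zero =>
    intro k _ hcarry h1 h0
    have hr := sval_rec hf0 hf1 he k
    have hr' := sval_rec hf0 hf1 he' k
    have hz : k + 0 + 1 = k + 1 := by omega
    rw [hz] at hcarry h1 h0
    rw [hr, hr', h1, h0, hcarry, rowSum_succ]
    ring
  | succ j ih =>
    intro k hpre hcarry h1 h0
    have hd : e (k + 1) = e' (k + 1) := hpre (k + 1) (by omega) (by omega)
    have harith : k + 1 + j + 1 = k + (j + 1) + 1 := by omega
    have hih : sval f e (k + 1) = sval f e' (k + 1) := by
      refine ih (k + 1) (fun t h1' h2' => hpre t (by omega) (by omega)) ?_ ?_ ?_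
      · rw [harith]; exact hcarry
      · rw [harith]; exact h1
      · rw [harith]; exact h0
    have hr := sval_rec hf0 hf1 he k
    have hr' := sval_rec hf0 hf1 he' k
    rw [hr, hr', hd, hih]

end Carry
end S10

/-- if all entries of `P` are nonnegative, then `F(0)=0`, `F(1)=1`, and `F`
is nondecreasing and continuous on `[0,1]`, i.e. a continuous distribution function. -/
theorem stmt10 (m : ℕ → ℕ) (q p : ℕ → ℕ → ℝ)
    (hq1 : ∀ n i, i ≤ m n → 0 < q n i)
    (hq2 : ∀ n, ∑ i ∈ Finset.range (m n + 1), q n i = 1)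
    (hq4 : ∀ d, ValidDigits m d →
      Tendsto (fun N => ∏ j ∈ Finset.Icc 1 N, q j (d j)) atTop (𝓝 0))
    (hp0 : ∀ n i, i ≤ m n → 0 ≤ p n i)
    (hp1 : ∀ n i, i ≤ m n → p n i < 1)
    (hp2 : ∀ n, ∑ i ∈ Finset.range (m n + 1), p n i = 1)
    (hp3 : ∀ n k, 1 ≤ k → k ≤ m n → rowSum p n k ∈ Set.Ioo (0 : ℝ) 1)
    (hp4 : ∀ d, ValidDigits m d →
      Tendsto (fun N => ∏ j ∈ Finset.Icc 1 N, p j (d j)) atTop (𝓝 0))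
    (G : ℝ → ℝ)
    (hG : ∀ d, ValidDigits m d → G (negaVal m q d) = negaVal m p d)
    (hsurj : ∀ x ∈ Set.Icc (0 : ℝ) 1, ∃ d, ValidDigits m d ∧ x = negaVal m q d) :
    G 0 = 0 ∧ G 1 = 1 ∧ MonotoneOn G (Set.Icc (0 : ℝ) 1) ∧
      ContinuousOn G (Set.Icc (0 : ℝ) 1) := by
  classical
  have hq0' : ∀ n i, i ≤ m n → 0 ≤ q n i := fun n i h => (hq1 n i h).le
  have hqs : ∀ n, rowSum q n (m n + 1) = 1 := hq2
  have hps : ∀ n, rowSum p n (m n + 1) = 1 := hp2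
  have hbq : ∀ d, negaVal m q d = S10.sval q (S10.E m d) 0 := fun d => S10.negaShift_eq m q d 0
  have hbp : ∀ d, negaVal m p d = S10.sval p (S10.E m d) 0 := fun d => S10.negaShift_eq m p d 0
  -- key comparison lemma
  have key : ∀ e e', ValidDigits m e → ValidDigits m e' →
      S10.sval q e 0 ≤ S10.sval q e' 0 → S10.sval p e 0 ≤ S10.sval p e' 0 := by
    intro e e' he he' hle
    by_cases hsame : ∀ t, 0 < t → e t = e' t
    · exact le_of_eq (S10.sval_congr_tail 0 hsame)
    · push_neg at hsame
      obtain ⟨t0, ht0, hne0⟩ := hsame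
      have hex : ∃ t, 0 < t ∧ e t ≠ e' t := ⟨t0, ht0, hne0⟩
      have hnpos : 0 < Nat.find hex := (Nat.find_spec hex).1
      have hnne : e (Nat.find hex) ≠ e' (Nat.find hex) := (Nat.find_spec hex).2
      have hpre : ∀ t, 0 < t → t < Nat.find hex → e t = e' t := by
        intro t h1 h2
        by_contra hc
        have := Nat.find_le (h := hex) (⟨h1, hc⟩ : 0 < t ∧ e t ≠ e' t)
        omega
      obtain ⟨j, hj⟩ : ∃ j, Nat.find hex = 0 + j + 1 := ⟨Nat.find hex - 1, by omega⟩
      have hpre' : ∀ t, 0 < t → t < 0 + j + 1 → e t = e' t := by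
        intro t h1 h2; exact hpre t h1 (by omega)
      rcases Nat.lt_or_ge (e (Nat.find hex)) (e' (Nat.find hex)) with hlt | hge
      · exact S10.sval_le_of_lex hp0 hps he he' j 0 hpre' (by rw [← hj]; exact hlt)
      · have hlt' : e' (0 + j + 1) < e (0 + j + 1) := by rw [← hj]; omega
        have hqle : S10.sval q e' 0 ≤ S10.sval q e 0 :=
          S10.sval_le_of_lex hq0' hqs he' he j 0 (fun t a b => (hpre' t a b).symm) hlt'
        have heq : S10.sval q e' 0 = S10.sval q e 0 := le_antisymm hqle hle
        obtain ⟨hcarry, hone, hzero⟩ :=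
          S10.eq_forcing_lex hq1 hqs he' he j 0 (fun t a b => (hpre' t a b).symm) hlt' heq
        have htail1 : ∀ t, 0 + j + 1 < t → e' t = m t := S10.tail_max hq1 hqs he' _ hone
        have htail0 : ∀ t, 0 + j + 1 < t → e t = 0 := S10.tail_min hq1 hqs he _ hzero
        have hpone : S10.sval p e' (0 + j + 1) = 1 :=
          S10.sval_of_tail_max hp0 hps he' _ (S10.tail_prod_tendsto hp0 hps he' hp4 _) htail1
        have hpzero : S10.sval p e (0 + j + 1) = 0 := S10.sval_of_tail_zero _ htail0
        have hfin :=
          S10.sval_eq_of_carry hp0 hps he' he j 0 (fun t a b => (hpre' t a b).symm)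
            hcarry hpone hpzero
        exact le_of_eq hfin.symm
  -- G(0) = 0
  have hG0 : G 0 = 0 := by
    obtain ⟨d, hd, hxd⟩ := hsurj 0 ⟨le_refl 0, zero_le_one⟩
    have h := hG d hd
    rw [← hxd] at h
    have h0 : S10.sval q (S10.E m d) 0 = 0 := by rw [← hbq d, ← hxd]
    have htail := S10.tail_min hq1 hqs (S10.E_valid hd) 0 h0
    rw [h, hbp d]
    exact S10.sval_of_tail_zero 0 htail
  -- G(1) = 1
  have hG1 : G 1 = 1 := by
    obtain ⟨d, hd, hxd⟩ := hsurj 1 ⟨zero_le_one, le_refl 1⟩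
    have h := hG d hd
    rw [← hxd] at h
    have h1 : S10.sval q (S10.E m d) 0 = 1 := by rw [← hbq d, ← hxd]
    have htail := S10.tail_max hq1 hqs (S10.E_valid hd) 0 h1
    rw [h, hbp d]
    exact S10.sval_of_tail_max hp0 hps (S10.E_valid hd) 0
      (S10.tail_prod_tendsto hp0 hps (S10.E_valid hd) hp4 0) htail
  -- monotone
  have hmono : MonotoneOn G (Set.Icc (0 : ℝ) 1) := by
    intro x hx y hy hxy
    obtain ⟨d, hd, hxd⟩ := hsurj x hx
    obtain ⟨d', hd', hyd⟩ := hsurj y hy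
    have hgx : G x = S10.sval p (S10.E m d) 0 := by
      have h := hG d hd; rw [← hxd] at h; rw [h, hbp d]
    have hgy : G y = S10.sval p (S10.E m d') 0 := by
      have h := hG d' hd'; rw [← hyd] at h; rw [h, hbp d']
    rw [hgx, hgy]
    refine key _ _ (S10.E_valid hd) (S10.E_valid hd') ?_
    rw [← hbq d, ← hbq d', ← hxd, ← hyd]
    exact hxy
  -- G maps [0,1] into [0,1]
  have hGmem : ∀ x ∈ Set.Icc (0 : ℝ) 1, G x ∈ Set.Icc (0 : ℝ) 1 := by
    intro x hx
    obtain ⟨d, hd, hxd⟩ := hsurj x hx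
    have h := hG d hd; rw [← hxd] at h
    rw [h, hbp d]
    exact ⟨S10.sval_nonneg hp0 (S10.E_valid hd) 0, S10.sval_le_one hp0 hps (S10.E_valid hd) 0⟩
  -- G is surjective onto [0,1]
  have himg : ∀ y ∈ Set.Icc (0 : ℝ) 1, ∃ x ∈ Set.Icc (0 : ℝ) 1, G x = y := by
    intro y hy
    obtain ⟨e, hev, hevy⟩ := S10.greedy_surj hp0 hps hp4 y ⟨hy.1, hy.2⟩
    have hdv : ValidDigits m (S10.E m e) := S10.E_valid hev
    have hEEd : S10.E m (S10.E m e) = e := S10.E_E hev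
    refine ⟨negaVal m q (S10.E m e), ?_, ?_⟩
    · rw [hbq _, hEEd]
      exact ⟨S10.sval_nonneg hq0' hev 0, S10.sval_le_one hq0' hqs hev 0⟩
    · rw [hG _ hdv, hbp _, hEEd, hevy]
  -- continuity
  have hcont : ContinuousOn G (Set.Icc (0 : ℝ) 1) := by
    intro a ha
    have hGa := hGmem a ha
    have hR : ContinuousWithinAt G (Set.Icc (0 : ℝ) 1 ∩ Set.Ici a) a := by
      rcases eq_or_lt_of_le ha.2 with ha1 | ha1
      · have hset : Set.Icc (0 : ℝ) 1 ∩ Set.Ici a = {a} := by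
          ext x
          simp only [Set.mem_inter_iff, Set.mem_Icc, Set.mem_Ici, Set.mem_singleton_iff]
          constructor
          · rintro ⟨⟨h1, h2⟩, h3⟩; rw [← ha1] at h2; linarith [le_antisymm h2 h3]
          · rintro rfl; exact ⟨⟨ha.1, ha.2⟩, le_refl _⟩
        rw [hset]; exact continuousWithinAt_singleton
      · rcases eq_or_lt_of_le hGa.2 with hGa1 | hGa1
        · refine (continuousWithinAt_const (b := G a)).congr (fun x hx => ?_) rfl
          have h1 : G a ≤ G x := hmono ha hx.1 hx.2
          have h2 : G x ≤ 1 := (hGmem x hx.1).2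
          rw [hGa1]; linarith
        · refine (continuousWithinAt_right_of_monotoneOn_of_exists_between hmono
            (Icc_mem_nhdsGE_of_mem ⟨ha.1, ha1⟩) ?_).mono Set.inter_subset_right
          intro b hb
          obtain ⟨y', hy1, hy2⟩ := exists_between (lt_min hb hGa1)
          have hy01 : y' ∈ Set.Icc (0 : ℝ) 1 :=
            ⟨le_trans hGa.1 hy1.le, (lt_min_iff.1 hy2).2.le⟩
          obtain ⟨c, hc, hcy⟩ := himg y' hy01
          exact ⟨c, hc, by rw [hcy]; exact ⟨hy1, (lt_min_iff.1 hy2).1⟩⟩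
    have hL : ContinuousWithinAt G (Set.Icc (0 : ℝ) 1 ∩ Set.Iic a) a := by
      rcases eq_or_lt_of_le ha.1 with ha0 | ha0
      · have hset : Set.Icc (0 : ℝ) 1 ∩ Set.Iic a = {a} := by
          ext x
          simp only [Set.mem_inter_iff, Set.mem_Icc, Set.mem_Iic, Set.mem_singleton_iff]
          constructor
          · rintro ⟨⟨h1, h2⟩, h3⟩; rw [ha0] at h1; linarith [le_antisymm h3 h1]
          · rintro rfl; exact ⟨⟨ha.1, ha.2⟩, le_refl _⟩
        rw [hset]; exact continuousWithinAt_singleton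
      · rcases eq_or_lt_of_le hGa.1 with hGa0 | hGa0
        · refine (continuousWithinAt_const (b := G a)).congr (fun x hx => ?_) rfl
          have h1 : G x ≤ G a := hmono hx.1 ha hx.2
          have h2 : 0 ≤ G x := (hGmem x hx.1).1
          rw [← hGa0]; linarith
        · refine (continuousWithinAt_left_of_monotoneOn_of_exists_between hmono
            (Icc_mem_nhdsLE_of_mem ⟨ha0, ha.2⟩) ?_).mono Set.inter_subset_right
          intro b hb
          obtain ⟨y', hy1, hy2⟩ := exists_between (max_lt hb hGa0)
          have hy01 : y' ∈ Set.Icc (0 : ℝ) 1 :=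
            ⟨(max_lt_iff.1 hy1).2.le, le_trans hy2.le hGa.2⟩
          obtain ⟨c, hc, hcy⟩ := himg y' hy01
          exact ⟨c, hc, by rw [hcy]; exact ⟨(max_lt_iff.1 hy1).1, hy2⟩⟩
    have hcover : Set.Icc (0 : ℝ) 1 ⊆
        (Set.Icc (0 : ℝ) 1 ∩ Set.Iic a) ∪ (Set.Icc (0 : ℝ) 1 ∩ Set.Ici a) := by
      intro x hx
      rcases le_total x a with h | h
      · exact Or.inl ⟨hx, h⟩
      · exact Or.inr ⟨hx, h⟩
    exact (hL.union hR).mono hcover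
  exact ⟨hG0, hG1, hmono, hcont⟩
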